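/- arXiv:0707.1774 — 2 statements merged into one kernel-verified Lean document; each statement's English description precedes it below -/
import Mathlib

section
/- Let H be a Hilbert space and T a bounded operator on H with ‖T‖ < 1 (a strict contraction). Define K(T) : H → ℓ²(ℕ, H) by (K(T)h)(n) = (I - T*T)^{1/2} (T^n h). Then K(T) is a well-defined isometry. -/
open ContinuousLinearMap in
/-- For a strict contraction `T`, the Poisson kernel
`(K(T)h)(n) = (I - T*T)^{1/2} T^n h` is a well-defined isometry `H → ℓ²(ℕ, H)`. -/
theorem poisson_kernel_isometry
    {H : Type*} [NormedAddCommGroup H] [InnerProductSpace ℂ H] [CompleteSpace H]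
    (T Δ : H →L[ℂ] H) (hT : ‖T‖ < 1)
    (hΔpos : 0 ≤ Δ) (hΔsq : Δ * Δ = 1 - adjoint T * T) :
    ∃ K : H →L[ℂ] lp (fun _ : ℕ => H) 2,
      (∀ (h : H) (n : ℕ), K h n = Δ ((T ^ n) h)) ∧ (∀ h : H, ‖K h‖ = ‖h‖) := by
  classical
  have hsa : ContinuousLinearMap.adjoint Δ = Δ :=
    ((ContinuousLinearMap.nonneg_iff_isPositive Δ).mp hΔpos).isSelfAdjoint
  -- key pointwise identity
  have key : ∀ x : H, ‖Δ x‖ ^ 2 = ‖x‖ ^ 2 - ‖T x‖ ^ 2 := by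
    intro x
    have h1 : (inner ℂ (Δ x) (Δ x) : ℂ) = inner ℂ x x - inner ℂ (T x) (T x) := by
      have hadj := ContinuousLinearMap.adjoint_inner_left Δ (Δ x) x
      rw [hsa] at hadj
      calc (inner ℂ (Δ x) (Δ x) : ℂ) = inner ℂ x (Δ (Δ x)) := hadj
        _ = inner ℂ x ((Δ * Δ) x) := by rw [ContinuousLinearMap.mul_apply]
        _ = inner ℂ x ((1 - adjoint T * T) x) := by rw [hΔsq]
        _ = inner ℂ x x - inner ℂ x ((adjoint T * T) x) := by
              simp [ContinuousLinearMap.sub_apply, inner_sub_right]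
        _ = inner ℂ x x - inner ℂ (T x) (T x) := by
              rw [ContinuousLinearMap.mul_apply, ContinuousLinearMap.adjoint_inner_right]
    have h2 := congrArg (RCLike.re : ℂ → ℝ) h1
    simpa [inner_self_eq_norm_sq (𝕜 := ℂ), map_sub, ← Complex.ofReal_pow, Complex.ofReal_re] using h2
  -- norm estimate for powers
  have hpowle : ∀ (N : ℕ) (h : H), ‖(T ^ N) h‖ ≤ ‖T‖ ^ N * ‖h‖ := by
    intro N h
    induction N with
    | zero => simp
    | succ n ih =>
      have : (T ^ (n + 1)) h = T ((T ^ n) h) := by rw [pow_succ']; rfl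
      rw [this]
      calc ‖T ((T ^ n) h)‖ ≤ ‖T‖ * ‖(T ^ n) h‖ := T.le_opNorm _
        _ ≤ ‖T‖ * (‖T‖ ^ n * ‖h‖) := by
            exact mul_le_mul_of_nonneg_left ih (norm_nonneg T)
        _ = ‖T‖ ^ (n + 1) * ‖h‖ := by ring
  -- the sum of squares
  have hsum : ∀ h : H, HasSum (fun n : ℕ => ‖Δ ((T ^ n) h)‖ ^ 2) (‖h‖ ^ 2) := by
    intro h
    refine (hasSum_iff_tendsto_nat_of_nonneg (fun n => by positivity) _).mpr ?_
    have hfe : ∀ n : ℕ, ‖Δ ((T ^ n) h)‖ ^ 2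
        = ‖(T ^ n) h‖ ^ 2 - ‖(T ^ (n + 1)) h‖ ^ 2 := by
      intro n
      have hs : (T ^ (n + 1)) h = T ((T ^ n) h) := by rw [pow_succ']; rfl
      rw [key, hs]
    have htend : Filter.Tendsto (fun N : ℕ => ‖(T ^ N) h‖ ^ 2) Filter.atTop (nhds 0) := by
      have h0 : Filter.Tendsto (fun N : ℕ => (‖T‖ ^ N * ‖h‖) ^ 2) Filter.atTop (nhds 0) := by
        have ht : Filter.Tendsto (fun N : ℕ => ‖T‖ ^ N) Filter.atTop (nhds 0) :=
          tendsto_pow_atTop_nhds_zero_of_lt_one (norm_nonneg T) hT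
        simpa using ((ht.mul_const ‖h‖).pow 2)
      refine squeeze_zero (fun N => by positivity) (fun N => ?_) h0
      exact pow_le_pow_left₀ (norm_nonneg _) (hpowle N h) 2
    have heq : ∀ N : ℕ, ∑ n ∈ Finset.range N, ‖Δ ((T ^ n) h)‖ ^ 2
        = ‖h‖ ^ 2 - ‖(T ^ N) h‖ ^ 2 := by
      intro N
      simp only [hfe]
      rw [Finset.sum_range_sub' (fun n => ‖(T ^ n) h‖ ^ 2)]
      simp
    simp only [heq]
    simpa using (tendsto_const_nhds.sub htend)
  -- rpow/pow conversion
  have hrp : ∀ x : H, ‖x‖ ^ ((2 : ENNReal)).toReal = ‖x‖ ^ (2 : ℕ) := by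
    intro x
    rw [show ((2 : ENNReal)).toReal = ((2 : ℕ) : ℝ) by norm_num, Real.rpow_natCast]
  -- membership in ℓ²
  have hmem : ∀ h : H, Memℓp (fun n : ℕ => Δ ((T ^ n) h)) 2 := by
    intro h
    apply memℓp_gen
    have hs : Summable fun n : ℕ => ‖Δ ((T ^ n) h)‖ ^ (2:ℕ) := (hsum h).summable
    simpa [hrp] using hs
  -- the linear map
  let K₀ : H →ₗ[ℂ] lp (fun _ : ℕ => H) 2 :=
    { toFun := fun h => ⟨fun n => Δ ((T ^ n) h), hmem h⟩
      map_add' := by intro x y; apply lp.ext; funext n; simp; rfl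
      map_smul' := by intro c x; apply lp.ext; funext n; simp }
  have hnorm : ∀ h : H, ‖K₀ h‖ = ‖h‖ := by
    intro h
    have h2 : (0:ℝ) < (2 : ENNReal).toReal := by norm_num
    have hr := lp.norm_rpow_eq_tsum h2 (K₀ h)
    have hc : ∀ n : ℕ, (K₀ h : ℕ → H) n = Δ ((T ^ n) h) := fun n => rfl
    have hts : (∑' n : ℕ, ‖(K₀ h : ℕ → H) n‖ ^ (2 : ENNReal).toReal) = ‖h‖ ^ (2:ℕ) := by
      rw [← (hsum h).tsum_eq]
      congr 1
      funext n
      rw [hc, hrp]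
    rw [hts] at hr
    have hr2 : ‖K₀ h‖ ^ (2:ℕ) = ‖h‖ ^ (2:ℕ) := by
      rw [← Real.rpow_natCast ‖K₀ h‖ 2, show (((2:ℕ)):ℝ) = ENNReal.toReal 2 by norm_num]
      exact hr
    nlinarith [norm_nonneg (K₀ h), norm_nonneg h, hr2]
  refine ⟨K₀.mkContinuous 1 (fun h => by rw [hnorm h, one_mul]), fun h n => rfl,
    fun h => hnorm h⟩
end

section
/- Let H be a Hilbert space and T ∈ B(H) with ‖T‖ < 1 and K(T) the Poisson kernel into ℓ²(ℕ, H) as above. Then ‖p(T)‖ ≤ sup_{|z| ≤ 1} |p(z)| for every polynomial p (von Neumann's inequality for strict contractions), deduced from p(T) = K(T)* p(S) K(T) and ‖p(S)‖ = sup_{|z|≤1} |p(z)|. -/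
noncomputable section
open Complex MeasureTheory ContinuousLinearMap Polynomial Finset
open scoped Real ComplexConjugate

namespace VonNeumannAux

variable {H : Type*} [NormedAddCommGroup H] [InnerProductSpace ℂ H] [CompleteSpace H]

local notation "⟪" x ", " y "⟫" => @inner ℂ _ _ x y

/-- the point `e^{iθ}` on the circle -/
def zc (θ : ℝ) : ℂ := Complex.exp (θ * I)

lemma norm_zc (θ : ℝ) : ‖zc θ‖ = 1 := Complex.norm_exp_ofReal_mul_I θ

lemma zc_pow (θ : ℝ) (k : ℕ) : (zc θ)^k = Complex.exp (k * θ * I) := by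
  rw [zc, ← Complex.exp_nat_mul]; ring_nf

lemma conj_zc_pow (θ : ℝ) (k : ℕ) : conj ((zc θ)^k) = Complex.exp (-(k*θ*I)) := by
  rw [zc_pow, ← Complex.exp_conj]
  congr 1
  simp [Complex.conj_ofReal]

/-- the vector-valued Poisson-type series -/
def u (L : H →L[ℂ] H) (x : H) (θ : ℝ) : H := ∑' k : ℕ, (zc θ)^k • ((L ^ k) x)

variable {L : H →L[ℂ] H}

lemma pow_opNorm_le (L : H →L[ℂ] H) (k : ℕ) : ‖L^k‖ ≤ ‖L‖^k := by
  induction k with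
  | zero => rw [pow_zero, pow_zero]; exact ContinuousLinearMap.norm_id_le (E := H)
  | succ n ih =>
      calc ‖L^(n+1)‖ = ‖L^n * L‖ := by rw [pow_succ]
        _ ≤ ‖L^n‖ * ‖L‖ := norm_mul_le _ _
        _ ≤ ‖L‖^n * ‖L‖ := by gcongr
        _ = ‖L‖^(n+1) := (pow_succ _ _).symm

lemma term_norm (x : H) (θ : ℝ) (k : ℕ) :
    ‖(zc θ)^k • ((L ^ k) x)‖ ≤ ‖L‖^k * ‖x‖ := by
  rw [norm_smul, norm_pow, norm_zc, one_pow, one_mul]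
  calc ‖(L^k) x‖ ≤ ‖L^k‖ * ‖x‖ := (L^k).le_opNorm x
    _ ≤ ‖L‖^k * ‖x‖ := by gcongr; exact pow_opNorm_le L k


variable (hL : ‖L‖ < 1)
include hL

lemma summable_term (x : H) (θ : ℝ) :
    Summable (fun k : ℕ => (zc θ)^k • ((L ^ k) x)) := by
  refine Summable.of_norm_bounded ?_ (term_norm x θ)
  exact (summable_geometric_of_lt_one (norm_nonneg L) hL).mul_right _

lemma norm_u_le (x : H) (θ : ℝ) : ‖u L x θ‖ ≤ (1 - ‖L‖)⁻¹ * ‖x‖ := by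
  refine le_trans (norm_tsum_le_tsum_norm ?_) ?_
  · exact ((summable_geometric_of_lt_one (norm_nonneg L) hL).mul_right _).of_nonneg_of_le
      (fun _ => norm_nonneg _) (term_norm x θ)
  · calc ∑' k : ℕ, ‖(zc θ)^k • ((L^k) x)‖
        ≤ ∑' k : ℕ, ‖L‖^k * ‖x‖ := by
          refine Summable.tsum_le_tsum (term_norm x θ) ?_ ?_
          · exact ((summable_geometric_of_lt_one (norm_nonneg L) hL).mul_right _).of_nonneg_of_le
              (fun _ => norm_nonneg _) (term_norm x θ)
          · exact (summable_geometric_of_lt_one (norm_nonneg L) hL).mul_right _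
      _ = (1 - ‖L‖)⁻¹ * ‖x‖ := by
          rw [tsum_mul_right, tsum_geometric_of_lt_one (norm_nonneg L) hL]

lemma continuous_u (x : H) : Continuous (fun θ => u L x θ) := by
  refine continuous_tsum (f := fun (k : ℕ) (θ : ℝ) => (zc θ)^k • ((L ^ k) x))
    (fun k => ?_) ((summable_geometric_of_lt_one (norm_nonneg L) hL).mul_right ‖x‖)
    (fun k θ => term_norm x θ k)
  exact ((Complex.continuous_exp.comp (by continuity)).pow k).smul continuous_const

lemma L_u (x : H) (θ : ℝ) : L (u L x θ) = u L (L x) θ := by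
  rw [u, ContinuousLinearMap.map_tsum L (summable_term hL x θ)]
  congr 1; ext k
  rw [_root_.map_smul]
  congr 1
  rw [← ContinuousLinearMap.mul_apply, ← pow_succ', ← ContinuousLinearMap.mul_apply, ← pow_succ]


lemma inner_u_right (w x : H) (θ : ℝ) :
    ⟪w, u L x θ⟫ = ∑' k : ℕ, (zc θ)^k * ⟪w, (L^k) x⟫ := by
  have := ContinuousLinearMap.map_tsum (innerSL ℂ w) (summable_term hL x θ)
  simp only [innerSL_apply_apply] at this
  rw [u, this]
  congr 1; ext k
  simp [inner_smul_right]

lemma inner_u_left (x w : H) (θ : ℝ) :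
    ⟪u L x θ, w⟫ = ∑' k : ℕ, conj ((zc θ)^k) * ⟪(L^k) x, w⟫ := by
  rw [← inner_conj_symm, inner_u_right hL, starRingEnd_apply, tsum_star]
  congr 1; ext k
  simp [← starRingEnd_apply, mul_comm]


omit hL

lemma integral_exp_int (m : ℤ) :
    ∫ θ in (0:ℝ)..(2*π), Complex.exp (m * θ * I) = if m = 0 then (2*π : ℂ) else 0 := by
  rcases eq_or_ne m 0 with hm | hm
  · subst hm
    simp
  · rw [if_neg hm]
    have h1 : ∀ θ : ℝ, Complex.exp ((m : ℂ) * θ * I) = Complex.exp ((m * I) * θ) := by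
      intro θ; ring_nf
    simp_rw [h1]
    rw [integral_exp_mul_complex (by simp [hm, Complex.I_ne_zero])]
    have : Complex.exp ((m : ℂ) * I * (2*π:ℝ)) = 1 := by
      push_cast
      rw [show (m:ℂ) * I * (2*π) = m * (2*π*I) by ring, Complex.exp_int_mul_two_pi_mul_I]
    push_cast at this ⊢
    simp [this]


/-- `E m θ = e^{imθ}` -/
def E (m : ℤ) (θ : ℝ) : ℂ := Complex.exp (m * θ * I)

lemma norm_E (m : ℤ) (θ : ℝ) : ‖E m θ‖ = 1 := by
  rw [E, show ((m:ℂ) * θ * I) = ((m * θ : ℝ) : ℂ) * I by push_cast; ring]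
  exact Complex.norm_exp_ofReal_mul_I _

lemma continuous_E (m : ℤ) : Continuous (E m) := by
  unfold E; continuity

lemma E_mul (a b : ℤ) (θ : ℝ) : E a θ * E b θ = E (a+b) θ := by
  rw [E, E, E, ← Complex.exp_add]; push_cast; ring_nf

lemma zc_pow_eq_E (θ : ℝ) (k : ℕ) : (zc θ)^k = E k θ := by
  rw [zc_pow, E]; norm_num

lemma conj_zc_pow_eq_E (θ : ℝ) (k : ℕ) : conj ((zc θ)^k) = E (-(k:ℤ)) θ := by
  rw [conj_zc_pow, E]; push_cast; ring_nf

lemma integral_E (m : ℤ) :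
    ∫ θ in Set.Ioc (0:ℝ) (2*π), E m θ = if m = 0 then (2*π : ℂ) else 0 := by
  rw [← intervalIntegral.integral_of_le (by positivity)]
  exact integral_exp_int m

lemma integral_norm_bound {f : ℝ → ℂ} (hf : Continuous f) {c : ℝ} (hc : ∀ θ, ‖f θ‖ ≤ c) :
    ∫ θ in Set.Ioc (0:ℝ) (2*π), ‖f θ‖ ≤ (2*π) * c := by
  have h2 : (0:ℝ) ≤ 2*π := by positivity
  calc ∫ θ in Set.Ioc (0:ℝ) (2*π), ‖f θ‖ ≤ ∫ _ in Set.Ioc (0:ℝ) (2*π), c := by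
        refine setIntegral_mono_on (hf.norm.integrableOn_Ioc) (integrableOn_const ?_)
          measurableSet_Ioc (fun θ _ => hc θ)
        exact measure_Ioc_lt_top.ne
    _ = (2*π) * c := by
        rw [setIntegral_const, Real.volume_real_Ioc_of_le h2, smul_eq_mul]
        ring


include hL

lemma Phi (x y : H) (n : ℕ) :
    ∫ θ in Set.Ioc (0:ℝ) (2*π), E (-(n:ℤ)) θ * ⟪u L x θ, u L y θ⟫ =
      (2*π : ℂ) * ∑' k : ℕ, ⟪(L^k) x, (L^(n+k)) y⟫ := by
  classical
  set A : ℝ := (1 - ‖L‖)⁻¹ * ‖y‖ with hA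
  have hgeo : Summable fun k : ℕ => ‖L‖^k := summable_geometric_of_lt_one (norm_nonneg L) hL
  have hpow : ∀ (k : ℕ) (w : H), ‖(L^k) w‖ ≤ ‖L‖^k * ‖w‖ := fun k w =>
    ((L^k).le_opNorm w).trans (by gcongr; exact pow_opNorm_le L k)
  set F : ℕ → ℝ → ℂ := fun k θ => E (-(n:ℤ) + -(k:ℤ)) θ * ⟪(L^k) x, u L y θ⟫ with hF
  have hcF : ∀ k, Continuous (F k) := fun k =>
    (continuous_E _).mul (Continuous.inner continuous_const (continuous_u hL y))
  have hbF : ∀ k θ, ‖F k θ‖ ≤ ‖L‖^k * ‖x‖ * A := by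
    intro k θ
    rw [hF]; dsimp only
    rw [norm_mul, norm_E, one_mul]
    calc ‖⟪(L^k) x, u L y θ⟫‖ ≤ ‖(L^k) x‖ * ‖u L y θ‖ := norm_inner_le_norm _ _
      _ ≤ (‖L‖^k * ‖x‖) * A :=
          mul_le_mul (hpow k x) (norm_u_le hL y θ) (norm_nonneg _) (by positivity)
  have hpt : ∀ θ, E (-(n:ℤ)) θ * ⟪u L x θ, u L y θ⟫ = ∑' k, F k θ := by
    intro θ
    rw [inner_u_left hL, ← tsum_mul_left]
    congr 1; ext k
    rw [conj_zc_pow_eq_E, ← mul_assoc, E_mul]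
  have hint : ∀ k, Integrable (F k) (volume.restrict (Set.Ioc (0:ℝ) (2*π))) := fun k =>
    (hcF k).integrableOn_Ioc
  have hsum : Summable fun k => ∫ θ in Set.Ioc (0:ℝ) (2*π), ‖F k θ‖ := by
    refine Summable.of_nonneg_of_le (fun k => integral_nonneg fun θ => norm_nonneg _)
      (fun k => integral_norm_bound (hcF k) (hbF k)) ?_
    exact ((hgeo.mul_right _).mul_right _).mul_left _
  simp_rw [hpt]
  rw [← integral_tsum_of_summable_integral_norm hint hsum]
  have hFk : ∀ k, ∫ θ in Set.Ioc (0:ℝ) (2*π), F k θ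
      = (2*π:ℂ) * ⟪(L^k) x, (L^(n+k)) y⟫ := by
    intro k
    set G : ℕ → ℝ → ℂ := fun j θ => E (-(n:ℤ) + -(k:ℤ) + j) θ * ⟪(L^k) x, (L^j) y⟫ with hG
    have hcG : ∀ j, Continuous (G j) := fun j => (continuous_E _).mul continuous_const
    have hbG : ∀ j θ, ‖G j θ‖ ≤ (‖L‖^k * ‖x‖) * (‖L‖^j * ‖y‖) := by
      intro j θ
      rw [hG]; dsimp only
      rw [norm_mul, norm_E, one_mul]
      calc ‖⟪(L^k) x, (L^j) y⟫‖ ≤ ‖(L^k) x‖ * ‖(L^j) y‖ := norm_inner_le_norm _ _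
        _ ≤ (‖L‖^k * ‖x‖) * (‖L‖^j * ‖y‖) :=
            mul_le_mul (hpow k x) (hpow j y) (norm_nonneg _) (by positivity)
    have hptG : ∀ θ, F k θ = ∑' j, G j θ := by
      intro θ
      rw [hF]; dsimp only
      rw [inner_u_right hL, ← tsum_mul_left]
      congr 1; ext j
      rw [zc_pow_eq_E, ← mul_assoc, E_mul]
    have hintG : ∀ j, Integrable (G j) (volume.restrict (Set.Ioc (0:ℝ) (2*π))) := fun j =>
      (hcG j).integrableOn_Ioc
    have hsumG : Summable fun j => ∫ θ in Set.Ioc (0:ℝ) (2*π), ‖G j θ‖ := by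
      refine Summable.of_nonneg_of_le (fun j => integral_nonneg fun θ => norm_nonneg _)
        (fun j => integral_norm_bound (hcG j) (hbG j)) ?_
      exact (((hgeo.mul_right _).mul_left _).mul_left _)
    simp_rw [hptG]
    rw [← integral_tsum_of_summable_integral_norm hintG hsumG]
    have hGj : ∀ j, ∫ θ in Set.Ioc (0:ℝ) (2*π), G j θ
        = (if -(n:ℤ) + -(k:ℤ) + j = 0 then (2*π:ℂ) else 0) * ⟪(L^k) x, (L^j) y⟫ := by
      intro j
      rw [hG]; dsimp only
      rw [MeasureTheory.integral_mul_const, integral_E]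
    simp_rw [hGj]
    rw [tsum_eq_single (n+k) ?_]
    · rw [if_pos (by push_cast; ring)]
    · intro j hj
      rw [if_neg ?_, zero_mul]
      intro hcon
      apply hj
      have : (j:ℤ) = (n:ℤ) + k := by omega
      exact_mod_cast this
  simp_rw [hFk]
  rw [tsum_mul_left]


omit hL

/-- Pointwise "AM-GM Cauchy-Schwarz" for the positive form `⟪a,b⟫ - ⟪La,Lb⟫`. -/
lemma form_bound {L : H →L[ℂ] H} (hL1 : ∀ w : H, ‖L w‖ ≤ ‖w‖) (a b : H) :
    ‖(⟪a,b⟫ - ⟪L a, L b⟫)‖ ≤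
      ((⟪a,a⟫ - ⟪L a, L a⟫).re + ((⟪b,b⟫ - ⟪L b, L b⟫)).re) / 2 := by
  set B : H → H → ℂ := fun v w => ⟪v,w⟫ - ⟪L v, L w⟫ with hB
  have hBre : ∀ w, (B w w).re = ‖w‖^2 - ‖L w‖^2 := by
    intro w
    have h1 : B w w = ((‖w‖^2 - ‖L w‖^2 : ℝ) : ℂ) := by
      simp only [hB, inner_self_eq_norm_sq_to_K]; norm_cast
    rw [h1, Complex.ofReal_re]
  have hnn : ∀ w, 0 ≤ (B w w).re := by
    intro w
    rw [hBre]
    nlinarith [hL1 w, norm_nonneg (L w), norm_nonneg w]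
  rcases eq_or_ne (B a b) 0 with h0 | h0
  · rw [show (⟪a,b⟫ - ⟪L a, L b⟫ : ℂ) = B a b from rfl, h0, norm_zero]
    have h1 := hnn a; have h2 := hnn b
    rw [show (⟪a,a⟫ - ⟪L a, L a⟫ : ℂ) = B a a from rfl,
      show (⟪b,b⟫ - ⟪L b, L b⟫ : ℂ) = B b b from rfl]
    linarith
  · set t : ℝ := ‖B a b‖ with ht
    have ht0 : (0:ℝ) < t := norm_pos_iff.2 h0
    have htC : (t:ℂ) ≠ 0 := by exact_mod_cast ht0.ne'
    set c : ℂ := -(conj (B a b)) / t with hc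
    have hsq : conj (B a b) * B a b = ((t^2 : ℝ) : ℂ) := by
      rw [← Complex.normSq_eq_conj_mul_self, Complex.normSq_eq_norm_sq]
    have hcBab : c * B a b = -t := by
      rw [hc, div_mul_eq_mul_div, neg_mul, hsq]
      push_cast
      rw [pow_two]
      field_simp
    have hconjc : conj c = -(B a b) / t := by
      rw [hc, map_div₀, map_neg, Complex.conj_conj, Complex.conj_ofReal]
    have hcconj : c * conj c = 1 := by
      calc c * conj c = (conj (B a b) * B a b) / ((t:ℂ) * t) := by
            rw [hc, hconjc]; ring
        _ = 1 := by rw [hsq]; push_cast; rw [pow_two]; field_simp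
    have hBba : B b a = conj (B a b) := by
      simp only [hB, map_sub, inner_conj_symm]
    have hexp : B (a + c • b) (a + c • b)
        = B a a + c * B a b + conj c * B b a + (c * conj c) * B b b := by
      simp only [hB, inner_add_left, inner_add_right, inner_smul_left, inner_smul_right,
        map_add, _root_.map_smul]
      ring
    have hkey := hnn (a + c • b)
    rw [hexp] at hkey
    have hconjcBba : conj c * B b a = -t := by
      rw [hBba, ← map_mul, hcBab]
      simp
    rw [hcBab, hconjcBba, hcconj, one_mul] at hkey
    simp only [Complex.add_re, Complex.neg_re, Complex.ofReal_re] at hkey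
    have h1 := hnn a; have h2 := hnn b
    rw [show (⟪a,a⟫ - ⟪L a, L a⟫ : ℂ) = B a a from rfl,
      show (⟪b,b⟫ - ⟪L b, L b⟫ : ℂ) = B b b from rfl]
    linarith


/-- The scalar Poisson-kernel pairing. -/
def hfun (L : H →L[ℂ] H) (x y : H) (θ : ℝ) : ℂ :=
  ⟪u L x θ, u L y θ⟫ - ⟪u L (L x) θ, u L (L y) θ⟫

include hL

lemma continuous_hfun (x y : H) : Continuous (hfun L x y) := by
  unfold hfun
  exact (Continuous.inner (continuous_u hL x) (continuous_u hL y)).sub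
    (Continuous.inner (continuous_u hL (L x)) (continuous_u hL (L y)))

lemma hfun_eq (x y : H) (θ : ℝ) :
    hfun L x y θ = ⟪u L x θ, u L y θ⟫ - ⟪L (u L x θ), L (u L y θ)⟫ := by
  rw [hfun, L_u hL, L_u hL]

lemma hfun_bound (x y : H) (θ : ℝ) :
    ‖hfun L x y θ‖ ≤ ((hfun L x x θ).re + (hfun L y y θ).re) / 2 := by
  have hL1 : ∀ w : H, ‖L w‖ ≤ ‖w‖ := fun w =>
    (L.le_opNorm w).trans (by nlinarith [norm_nonneg w, norm_nonneg L, L.le_opNorm w])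
  rw [hfun_eq hL, hfun_eq hL, hfun_eq hL]
  exact form_bound hL1 _ _

lemma integral_hfun (x y : H) (n : ℕ) :
    ∫ θ in Set.Ioc (0:ℝ) (2*π), E (-(n:ℤ)) θ * hfun L x y θ
      = (2*π:ℂ) * ⟪x, (L^n) y⟫ := by
  have hcont : ∀ x' y' : H, Continuous fun θ => E (-(n:ℤ)) θ * ⟪u L x' θ, u L y' θ⟫ :=
    fun x' y' => (continuous_E _).mul (Continuous.inner (continuous_u hL x') (continuous_u hL y'))
  have hi : ∀ x' y' : H,
      Integrable (fun θ => E (-(n:ℤ)) θ * ⟪u L x' θ, u L y' θ⟫)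
        (volume.restrict (Set.Ioc (0:ℝ) (2*π))) := fun x' y' => (hcont x' y').integrableOn_Ioc
  simp only [hfun, mul_sub]
  rw [MeasureTheory.integral_sub (hi x y) (hi (L x) (L y)), Phi hL x y n, Phi hL (L x) (L y) n]
  set a : ℕ → ℂ := fun k => ⟪(L^k) x, (L^(n+k)) y⟫ with ha
  have hpow : ∀ (k : ℕ) (w : H), ‖(L^k) w‖ ≤ ‖L‖^k * ‖w‖ := fun k w =>
    ((L^k).le_opNorm w).trans (by gcongr; exact pow_opNorm_le L k)
  have hsa : Summable a := by
    refine Summable.of_norm_bounded (g := fun k => ‖L‖^k * (‖x‖ * ‖y‖))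
      ((summable_geometric_of_lt_one (norm_nonneg L) hL).mul_right _) (fun k => ?_)
    calc ‖a k‖ ≤ ‖(L^k) x‖ * ‖(L^(n+k)) y‖ := norm_inner_le_norm _ _
      _ ≤ (‖L‖^k * ‖x‖) * (‖L‖^(n+k) * ‖y‖) :=
          mul_le_mul (hpow k x) (hpow (n+k) y) (norm_nonneg _) (by positivity)
      _ ≤ (‖L‖^k * ‖x‖) * (1 * ‖y‖) := by
          gcongr
          exact pow_le_one₀ (norm_nonneg L) hL.le
      _ = ‖L‖^k * (‖x‖ * ‖y‖) := by ring
  have hshift : ∀ k : ℕ, (⟪(L^k) (L x), (L^(n+k)) (L y)⟫ : ℂ) = a (k+1) := by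
    intro k
    have e1 : (L^k) (L x) = (L^(k+1)) x := by
      rw [← ContinuousLinearMap.mul_apply, ← pow_succ]
    have e2 : (L^(n+k)) (L y) = (L^(n+(k+1))) y := by
      rw [← ContinuousLinearMap.mul_apply, ← pow_succ, Nat.add_assoc]
    rw [ha, e1, e2]
  simp_rw [hshift]
  rw [show (∑' k : ℕ, a k) = a 0 + ∑' k : ℕ, a (k+1) from Summable.tsum_eq_zero_add hsa]
  have ha0 : a 0 = ⟪x, (L^n) y⟫ := by
    rw [ha]; dsimp only
    rw [pow_zero, add_zero, ContinuousLinearMap.one_apply]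
  rw [ha0]
  ring


lemma integral_hfun_self (x : H) :
    ∫ θ in Set.Ioc (0:ℝ) (2*π), (hfun L x x θ).re = 2*π * ‖x‖^2 := by
  have h0 := integral_hfun hL x x 0
  have hE0 : ∀ θ : ℝ, E (-(0:ℕ):ℤ) θ = 1 := by
    intro θ; rw [E]; norm_num
  simp only [hE0, one_mul, pow_zero, ContinuousLinearMap.one_apply] at h0
  have hint : Integrable (hfun L x x) (volume.restrict (Set.Ioc (0:ℝ) (2*π))) :=
    (continuous_hfun hL x x).integrableOn_Ioc
  have := ContinuousLinearMap.integral_comp_comm Complex.reCLM hint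
  simp only [Complex.reCLM_apply] at this
  rw [this, h0, inner_self_eq_norm_sq_to_K]
  push_cast
  simp [Complex.ofReal_pow]
  rw [← Complex.ofReal_pow, Complex.ofReal_re]

omit hL in
lemma key_formula (T : H →L[ℂ] H) (hT : ‖T‖ < 1) (p : Polynomial ℂ) (x y : H) :
    (⟪(Polynomial.aeval T p) x, y⟫ : ℂ)
      = ((2*π:ℝ) : ℂ)⁻¹ * ∫ θ in Set.Ioc (0:ℝ) (2*π),
          conj (p.eval (zc θ)) * hfun (ContinuousLinearMap.adjoint T) x y θ := by
  set L := ContinuousLinearMap.adjoint T with hLdef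
  have hL : ‖L‖ < 1 := by
    rw [hLdef]
    have : ‖ContinuousLinearMap.adjoint T‖ = ‖T‖ :=
      LinearIsometryEquiv.norm_map ContinuousLinearMap.adjoint T
    rw [this]; exact hT
  have hTn : ∀ n : ℕ, (⟪x, (L^n) y⟫ : ℂ) = ⟪(T^n) x, y⟫ := by
    intro n
    have hpowadj : L^n = ContinuousLinearMap.adjoint (T^n) := by
      rw [hLdef, ← ContinuousLinearMap.star_eq_adjoint, ← ContinuousLinearMap.star_eq_adjoint,
        star_pow]
    rw [hpowadj, ContinuousLinearMap.adjoint_inner_right]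
  set N := p.natDegree with hN
  -- expand the integrand as a finite sum
  have hpt : ∀ θ : ℝ, conj (p.eval (zc θ)) * hfun L x y θ
      = ∑ n ∈ Finset.range (N+1), conj (p.coeff n) * (E (-(n:ℤ)) θ * hfun L x y θ) := by
    intro θ
    rw [Polynomial.eval_eq_sum_range, map_sum, Finset.sum_mul]
    congr 1; ext n
    rw [map_mul, conj_zc_pow_eq_E, mul_assoc]
  simp_rw [hpt]
  rw [MeasureTheory.integral_finset_sum]
  · have hterm : ∀ n ∈ Finset.range (N+1),
        ∫ θ in Set.Ioc (0:ℝ) (2*π), conj (p.coeff n) * (E (-(n:ℤ)) θ * hfun L x y θ)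
          = conj (p.coeff n) * ((2*π:ℂ) * ⟪(T^n) x, y⟫) := by
      intro n _
      rw [MeasureTheory.integral_const_mul, integral_hfun hL, hTn]
    rw [Finset.sum_congr rfl hterm]
    have hlhs : (⟪(Polynomial.aeval T p) x, y⟫ : ℂ)
        = ∑ n ∈ Finset.range (N+1), conj (p.coeff n) * ⟪(T^n) x, y⟫ := by
      rw [Polynomial.aeval_eq_sum_range]
      rw [ContinuousLinearMap.sum_apply]
      rw [sum_inner]
      congr 1; ext n
      rw [ContinuousLinearMap.smul_apply, inner_smul_left]
    rw [hlhs, Finset.mul_sum]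
    congr 1; ext n
    have h2π : ((2*π:ℝ):ℂ) ≠ 0 := by
      push_cast
      simp [Real.pi_ne_zero]
    push_cast at h2π ⊢
    field_simp
  · intro n _
    exact (continuous_const.mul ((continuous_E _).mul (continuous_hfun hL x y))).integrableOn_Ioc


omit hL in
lemma inner_bound (T : H →L[ℂ] H) (hT : ‖T‖ < 1) (p : Polynomial ℂ) {M : ℝ} (hM0 : 0 ≤ M)
    (hMz : ∀ z : ℂ, ‖z‖ ≤ 1 → ‖p.eval z‖ ≤ M) (x y : H) :
    ‖(⟪(Polynomial.aeval T p) x, y⟫ : ℂ)‖ ≤ M * ((‖x‖^2 + ‖y‖^2)/2) := by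
  set L := ContinuousLinearMap.adjoint T with hLdef
  have hL : ‖L‖ < 1 := by
    rw [hLdef, LinearIsometryEquiv.norm_map ContinuousLinearMap.adjoint T]; exact hT
  have hπ : (0:ℝ) < 2*π := by positivity
  rw [key_formula T hT p x y, norm_mul]
  have hn1 : ‖(((2*π:ℝ)):ℂ)⁻¹‖ = (2*π)⁻¹ := by
    rw [norm_inv, Complex.norm_real, Real.norm_of_nonneg hπ.le]
  rw [hn1]
  have hczc : Continuous zc := by
    unfold zc; continuity
  have hcont1 : Continuous fun θ => conj (p.eval (zc θ)) * hfun L x y θ :=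
    (Complex.continuous_conj.comp (p.continuous.comp hczc)).mul (continuous_hfun hL x y)
  have hcont2 : Continuous fun θ => M * (((hfun L x x θ).re + (hfun L y y θ).re)/2) := by
    refine continuous_const.mul (Continuous.div_const (Continuous.add ?_ ?_) 2)
    · exact Complex.continuous_re.comp (continuous_hfun hL x x)
    · exact Complex.continuous_re.comp (continuous_hfun hL y y)
  have step1 : ‖∫ θ in Set.Ioc (0:ℝ) (2*π), conj (p.eval (zc θ)) * hfun L x y θ‖
      ≤ ∫ θ in Set.Ioc (0:ℝ) (2*π), ‖conj (p.eval (zc θ)) * hfun L x y θ‖ :=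
    MeasureTheory.norm_integral_le_integral_norm _
  have step2 : ∫ θ in Set.Ioc (0:ℝ) (2*π), ‖conj (p.eval (zc θ)) * hfun L x y θ‖
      ≤ ∫ θ in Set.Ioc (0:ℝ) (2*π), M * (((hfun L x x θ).re + (hfun L y y θ).re)/2) := by
    refine setIntegral_mono_on (hcont1.norm.integrableOn_Ioc) (hcont2.integrableOn_Ioc)
      measurableSet_Ioc (fun θ _ => ?_)
    rw [norm_mul, RCLike.norm_conj]
    exact mul_le_mul (hMz _ (le_of_eq (norm_zc θ))) (hfun_bound hL x y θ) (norm_nonneg _) hM0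
  have step3 : ∫ θ in Set.Ioc (0:ℝ) (2*π), M * (((hfun L x x θ).re + (hfun L y y θ).re)/2)
      = M/2 * (2*π*‖x‖^2 + 2*π*‖y‖^2) := by
    have : ∀ θ, M * (((hfun L x x θ).re + (hfun L y y θ).re)/2)
        = M/2 * ((hfun L x x θ).re + (hfun L y y θ).re) := fun θ => by ring
    simp_rw [this]
    have hrx : Continuous fun θ => (hfun L x x θ).re :=
      Complex.continuous_re.comp (continuous_hfun hL x x)
    have hry : Continuous fun θ => (hfun L y y θ).re :=
      Complex.continuous_re.comp (continuous_hfun hL y y)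
    rw [MeasureTheory.integral_const_mul, MeasureTheory.integral_add
      hrx.integrableOn_Ioc hry.integrableOn_Ioc,
      integral_hfun_self hL, integral_hfun_self hL]
  calc (2*π)⁻¹ * ‖∫ θ in Set.Ioc (0:ℝ) (2*π), conj (p.eval (zc θ)) * hfun L x y θ‖
      ≤ (2*π)⁻¹ * (M/2 * (2*π*‖x‖^2 + 2*π*‖y‖^2)) := by
        refine mul_le_mul_of_nonneg_left ((step1.trans step2).trans_eq step3) (by positivity)
    _ = M * ((‖x‖^2 + ‖y‖^2)/2) := by field_simp

end VonNeumannAux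

open VonNeumannAux in
/-- Von Neumann's inequality for strict contractions:
`‖p(T)‖ ≤ sup_{|z| ≤ 1} |p(z)|` for every polynomial `p`. -/
theorem vonNeumann_inequality_strict_contraction
    {H : Type*} [NormedAddCommGroup H] [InnerProductSpace ℂ H] [CompleteSpace H]
    (T : H →L[ℂ] H) (hT : ‖T‖ < 1) (p : Polynomial ℂ) :
    ‖Polynomial.aeval T p‖ ≤ sSup ((fun z : ℂ => ‖p.eval z‖) '' Metric.closedBall 0 1) := by
  classical
  set M := sSup ((fun z : ℂ => ‖p.eval z‖) '' Metric.closedBall 0 1) with hM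
  have hbdd : BddAbove ((fun z : ℂ => ‖p.eval z‖) '' Metric.closedBall 0 1) :=
    (isCompact_closedBall (0:ℂ) 1).bddAbove_image (p.continuous.norm.continuousOn)
  have hMz : ∀ z : ℂ, ‖z‖ ≤ 1 → ‖p.eval z‖ ≤ M := by
    intro z hz
    refine le_csSup hbdd ⟨z, ?_, rfl⟩
    simpa [Metric.mem_closedBall, Complex.dist_eq] using hz
  have hM0 : 0 ≤ M := le_trans (norm_nonneg _) (hMz 0 (by simp))
  have hxy : ∀ x y : H, ‖(inner ℂ ((Polynomial.aeval T p) x) y : ℂ)‖ ≤ M * (‖x‖ * ‖y‖) := by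
    intro x y
    rcases eq_or_ne x 0 with rfl | hx
    · simp
    rcases eq_or_ne y 0 with rfl | hy
    · simp [inner_zero_right]
    have hx0 : (0:ℝ) < ‖x‖ := norm_pos_iff.2 hx
    have hy0 : (0:ℝ) < ‖y‖ := norm_pos_iff.2 hy
    set s : ℝ := Real.sqrt (‖y‖ / ‖x‖) with hs
    have hs0 : 0 < s := Real.sqrt_pos.2 (by positivity)
    have hs2 : s^2 = ‖y‖ / ‖x‖ := Real.sq_sqrt (by positivity)
    set c : ℂ := (s : ℂ) with hc
    have hc0 : c ≠ 0 := by
      simp only [hc, ne_eq, Complex.ofReal_eq_zero]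
      exact hs0.ne'
    have happ := inner_bound T hT p hM0 hMz (c • x) (c⁻¹ • y)
    have heq : (inner ℂ ((Polynomial.aeval T p) (c • x)) (c⁻¹ • y) : ℂ)
        = inner ℂ ((Polynomial.aeval T p) x) y := by
      rw [ContinuousLinearMap.map_smul, inner_smul_left, inner_smul_right]
      rw [Complex.conj_ofReal]
      field_simp
      rfl
    rw [heq] at happ
    have hnx : ‖c • x‖ = s * ‖x‖ := by
      rw [norm_smul, hc, Complex.norm_real, Real.norm_of_nonneg hs0.le]
    have hny : ‖c⁻¹ • y‖ = s⁻¹ * ‖y‖ := by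
      rw [norm_smul, norm_inv, hc, Complex.norm_real, Real.norm_of_nonneg hs0.le]
    rw [hnx, hny] at happ
    refine happ.trans (le_of_eq ?_)
    have h1 : (s*‖x‖)^2 = ‖y‖ * ‖x‖ := by
      rw [mul_pow, hs2]
      field_simp
    have h2 : (s⁻¹*‖y‖)^2 = ‖x‖ * ‖y‖ := by
      rw [mul_pow, inv_pow, hs2]
      field_simp
    rw [h1, h2]
    ring
  refine ContinuousLinearMap.opNorm_le_bound _ hM0 (fun x => ?_)
  rcases eq_or_ne ((Polynomial.aeval T p) x) 0 with h0 | h0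
  · rw [h0, norm_zero]
    positivity
  have h2 := hxy x ((Polynomial.aeval T p) x)
  have h3 : (inner ℂ ((Polynomial.aeval T p) x) ((Polynomial.aeval T p) x) : ℂ)
      = ((‖(Polynomial.aeval T p) x‖^2 : ℝ) : ℂ) := by
    rw [inner_self_eq_norm_sq_to_K]
    norm_cast
  rw [h3] at h2
  rw [Complex.norm_real, Real.norm_of_nonneg (by positivity)] at h2
  have hv0 : (0:ℝ) < ‖(Polynomial.aeval T p) x‖ := norm_pos_iff.2 h0
  nlinarith [hv0]
end
end
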